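/- arXiv:1211.3553 — 3 statements merged into one kernel-verified Lean document; each statement's English description precedes it below -/
import Mathlib

section
/- Key equivalence of the two-round cipher under flipping the most significant bit of the keystream: for 8-bit values p, t', c', k, the composed encryption output p XOR (t' ∔ k) XOR (c' ∔ k) is unchanged when k is replaced by k XOR 128: p XOR (t' ∔ (k XOR 128)) XOR (c' ∔ (k XOR 128)) = p XOR (t' ∔ k) XOR (c' ∔ k). -/
set_option maxRecDepth 4000 in
lemma add128_mod : ∀ x < 256, (x + 128) % 256 = x ^^^ 128 := by decide

set_option maxRecDepth 4000 in
lemma xor128 : ∀ k < 256, k ^^^ 128 = (k + 128) % 256 := by decide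

lemma xor_cancel128 (a b p : ℕ) : p ^^^ (a ^^^ 128) ^^^ (b ^^^ 128) = p ^^^ a ^^^ b := by
  rw [Nat.xor_assoc p, Nat.xor_assoc a, Nat.xor_comm 128 (b ^^^ 128), Nat.xor_assoc b,
    Nat.xor_self, Nat.xor_zero, ← Nat.xor_assoc]

theorem key_flip_msb_equiv (p t' c' k : ℕ)
    (hp : p < 256) (ht' : t' < 256) (hc' : c' < 256) (hk : k < 256) :
    p ^^^ ((t' + (k ^^^ 128)) % 256) ^^^ ((c' + (k ^^^ 128)) % 256)
      = p ^^^ ((t' + k) % 256) ^^^ ((c' + k) % 256) := by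
  have h1 : ∀ x < 256, (x + (k ^^^ 128)) % 256 = ((x + k) % 256) ^^^ 128 := by
    intro x hx
    rw [xor128 k hk, ← add128_mod _ (Nat.mod_lt _ (by norm_num))]
    omega
  rw [h1 t' ht', h1 c' hc', xor_cancel128]
end

section
/- Consequently, for a keystream K = (k(1), ..., k(L)) of 8-bit values, any keystream K' with k'(i) ∈ {k(i), k(i) XOR 128} for each i produces the same ciphertext under the composed encryption map c(i) = p(i) XOR (t(i-1) ∔ k(i)) XOR (c(i-1) ∔ k(i)); in particular there are at least 2^L keystreams equivalent to K (if the L ≥ 1 values are all below 128 these 2^L keystreams are pairwise distinct). -/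
lemma add128_mod_s11 (a : ℕ) (ha : a < 256) : (a + 128) % 256 = a ^^^ 128 := by
  interval_cases a <;> rfl

theorem equivalent_keystreams (L : ℕ) (hL : 1 ≤ L) (k : Fin L → ℕ)
    (hk : ∀ i, k i < 128) :
    (∀ p t' c' x : ℕ, p < 256 → t' < 256 → c' < 256 → x < 256 →
      p ^^^ ((t' + (x ^^^ 128)) % 256) ^^^ ((c' + (x ^^^ 128)) % 256)
        = p ^^^ ((t' + x) % 256) ^^^ ((c' + x) % 256)) ∧
    Function.Injective
      (fun S : Finset (Fin L) => fun i => if i ∈ S then k i ^^^ 128 else k i) := by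
  constructor
  · intro p t' c' x hp ht hc hx
    have hx128 : x ^^^ 128 = (x + 128) % 256 := (add128_mod_s11 x hx).symm
    have key : ∀ a : ℕ, (a + (x ^^^ 128)) % 256 = ((a + x) % 256) ^^^ 128 := by
      intro a
      have h1 : (a + (x ^^^ 128)) % 256 = ((a + x) % 256 + 128) % 256 := by
        rw [hx128]; omega
      rw [h1, add128_mod_s11 _ (Nat.mod_lt _ (by norm_num))]
    rw [key t', key c']
    have cancel : ∀ u v w : ℕ, u ^^^ (v ^^^ 128) ^^^ (w ^^^ 128) = u ^^^ v ^^^ w := by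
      intro u v w
      have h2 : (v ^^^ 128) ^^^ (w ^^^ 128) = v ^^^ w := by
        rw [Nat.xor_assoc, Nat.xor_comm 128 (w ^^^ 128), Nat.xor_assoc, Nat.xor_self,
          Nat.xor_zero]
      rw [Nat.xor_assoc, h2, ← Nat.xor_assoc]
    exact cancel p _ _
  · intro S T h
    ext i
    have hi := congrFun h i
    simp only at hi
    have hx : k i ^^^ 128 ≠ k i := by
      intro h2
      have h3 : (k i ^^^ 128) ^^^ k i = k i ^^^ k i := by rw [h2]
      rw [Nat.xor_assoc, Nat.xor_comm 128 (k i), ← Nat.xor_assoc, Nat.xor_self,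
        Nat.zero_xor] at h3
      exact absurd h3 (by norm_num)
    by_cases hS : i ∈ S <;> by_cases hT : i ∈ T <;> simp [hS, hT] at hi ⊢
    · exact hx hi.symm
end

section
/- Invertibility of the full two-round encryption: for L ≥ 2, given keystream k : Fin L → Fin 256 and constant c0, the map sending plaintext P = (p(1), ..., p(L)) to ciphertext C defined by t(1) = p(1) XOR k(1) XOR (c0 ∔ k(1)), t(i) = p(i) XOR k(i-1) XOR (t(i-1) ∔ k(i)) for 2 ≤ i ≤ L, c(1) = t(1) XOR k(1) XOR (t(L) ∔ k(1)), c(i) = t(i) XOR k(i-1) XOR (c(i-1) ∔ k(i)) for 2 ≤ i ≤ L, is injective on (Fin 256)^L. -/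
private lemma fin_val_xor (a b : Fin 256) : (a ^^^ b).val = a.val ^^^ b.val := by
  have h0 : (a ^^^ b).val = (a.val ^^^ b.val) % 256 := rfl
  have h : a.val ^^^ b.val < 256 := Nat.xor_lt_two_pow (n := 8) a.isLt b.isLt
  rw [h0, Nat.mod_eq_of_lt h]

private lemma fin_xor_cancel_right (a x : Fin 256) : (a ^^^ x) ^^^ x = a := by
  apply Fin.ext; rw [fin_val_xor, fin_val_xor, Nat.xor_xor_cancel_right]

private lemma xor_double_cancel (a b x y : Fin 256)
    (h : a ^^^ x ^^^ y = b ^^^ x ^^^ y) : a = b := by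
  have h1 : a ^^^ x = b ^^^ x := by
    have := congrArg (· ^^^ y) h
    simpa [fin_xor_cancel_right] using this
  have := congrArg (· ^^^ x) h1
  simpa [fin_xor_cancel_right] using this

theorem two_round_encryption_injective (L : ℕ) (hL : 2 ≤ L)
    (k : ℕ → Fin 256) (c0 : Fin 256)
    (p₁ p₂ t₁ t₂ c₁ c₂ : ℕ → Fin 256)
    (ht₁1 : t₁ 1 = p₁ 1 ^^^ k 1 ^^^ (c0 + k 1))
    (ht₁ : ∀ i, 2 ≤ i → i ≤ L → t₁ i = p₁ i ^^^ k (i - 1) ^^^ (t₁ (i - 1) + k i))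
    (hc₁1 : c₁ 1 = t₁ 1 ^^^ k 1 ^^^ (t₁ L + k 1))
    (hc₁ : ∀ i, 2 ≤ i → i ≤ L → c₁ i = t₁ i ^^^ k (i - 1) ^^^ (c₁ (i - 1) + k i))
    (ht₂1 : t₂ 1 = p₂ 1 ^^^ k 1 ^^^ (c0 + k 1))
    (ht₂ : ∀ i, 2 ≤ i → i ≤ L → t₂ i = p₂ i ^^^ k (i - 1) ^^^ (t₂ (i - 1) + k i))
    (hc₂1 : c₂ 1 = t₂ 1 ^^^ k 1 ^^^ (t₂ L + k 1))
    (hc₂ : ∀ i, 2 ≤ i → i ≤ L → c₂ i = t₂ i ^^^ k (i - 1) ^^^ (c₂ (i - 1) + k i))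
    (hcc : ∀ i, 1 ≤ i → i ≤ L → c₁ i = c₂ i) :
    ∀ i, 1 ≤ i → i ≤ L → p₁ i = p₂ i := by
  -- Step 1: t₁ i = t₂ i for 2 ≤ i ≤ L
  have htL : ∀ i, 2 ≤ i → i ≤ L → t₁ i = t₂ i := by
    intro i h2 hiL
    have e1 := hc₁ i h2 hiL
    have e2 := hc₂ i h2 hiL
    have hprev : c₁ (i - 1) = c₂ (i - 1) := hcc (i - 1) (by omega) (by omega)
    have : t₁ i ^^^ k (i - 1) ^^^ (c₁ (i - 1) + k i)
         = t₂ i ^^^ k (i - 1) ^^^ (c₁ (i - 1) + k i) := by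
      rw [← e1, hprev, ← e2]
      exact hcc i (by omega) hiL
    exact xor_double_cancel _ _ _ _ this
  -- Step 2: t₁ 1 = t₂ 1
  have ht1 : t₁ 1 = t₂ 1 := by
    have hLt : t₁ L = t₂ L := htL L hL le_rfl
    have : t₁ 1 ^^^ k 1 ^^^ (t₁ L + k 1) = t₂ 1 ^^^ k 1 ^^^ (t₁ L + k 1) := by
      rw [← hc₁1, hLt, ← hc₂1]
      exact hcc 1 le_rfl (by omega)
    exact xor_double_cancel _ _ _ _ this
  have ht : ∀ i, 1 ≤ i → i ≤ L → t₁ i = t₂ i := by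
    intro i h1 hiL
    rcases Nat.lt_or_ge i 2 with h | h
    · have : i = 1 := by omega
      subst this; exact ht1
    · exact htL i h hiL
  -- Step 3: recover plaintext equality
  intro i h1 hiL
  rcases Nat.lt_or_ge i 2 with h | h
  · have : i = 1 := by omega
    subst this
    have : p₁ 1 ^^^ k 1 ^^^ (c0 + k 1) = p₂ 1 ^^^ k 1 ^^^ (c0 + k 1) := by
      rw [← ht₁1, ← ht₂1]; exact ht1
    exact xor_double_cancel _ _ _ _ this
  · have hprev : t₁ (i - 1) = t₂ (i - 1) := ht (i - 1) (by omega) (by omega)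
    have : p₁ i ^^^ k (i - 1) ^^^ (t₁ (i - 1) + k i)
         = p₂ i ^^^ k (i - 1) ^^^ (t₁ (i - 1) + k i) := by
      rw [← ht₁ i h hiL, hprev, ← ht₂ i h hiL]
      exact ht i (by omega) hiL
    exact xor_double_cancel _ _ _ _ this
end
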